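/- If A is an N×N real matrix of rank at most n with max_{i,j} |A_{i,j} - δ_{i,j}| ≤ 1/3, then N ≤ 6^n. -/

import Mathlib

set_option maxHeartbeats 2000000

open Polynomial Polynomial.Chebyshev Finset Submodule

noncomputable def chebev (k : ℕ) (x : ℝ) : ℝ := (T ℝ k).eval x

lemma chebev_zero (x : ℝ) : chebev 0 x = 1 := by simp [chebev]

lemma chebev_one (x : ℝ) : chebev 1 x = x := by simp [chebev]

lemma chebev_rec (k : ℕ) (x : ℝ) :
    chebev (k + 2) x = 2 * x * chebev (k + 1) x - chebev k x := by
  have h := T_add_two ℝ (k : ℤ)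
  have : ((k : ℤ) + 2) = ((k + 2 : ℕ) : ℤ) := by push_cast; ring
  rw [this] at h
  have h1 : ((k : ℤ) + 1) = ((k + 1 : ℕ) : ℤ) := by push_cast; ring
  rw [h1] at h
  simp [chebev, h]

lemma natDegree_T_le : ∀ k : ℕ, (T ℝ k).natDegree ≤ k := by
  intro k
  induction k using Nat.strong_induction_on with
  | _ k ih =>
    match k with
    | 0 => simp
    | 1 => simpa [T_one] using natDegree_X_le
    | (k + 2) =>
      have h : (T ℝ ((k:ℤ) + 2)) = 2 * X * T ℝ ((k:ℤ) + 1) - T ℝ k := T_add_two ℝ k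
      have e2 : ((k : ℤ) + 2) = ((k + 2 : ℕ) : ℤ) := by push_cast; ring
      have e1 : ((k : ℤ) + 1) = ((k + 1 : ℕ) : ℤ) := by push_cast; ring
      rw [e2, e1] at h
      rw [h]
      refine (natDegree_sub_le _ _).trans (max_le ?_ ?_)
      · refine (natDegree_mul_le).trans ?_
        have h1 : (2 * X : ℝ[X]).natDegree ≤ 1 := by
          refine (natDegree_mul_le).trans ?_
          simp
        have h2 := ih (k+1) (by omega)
        omega
      · exact (ih k (by omega)).trans (by omega)

lemma chebev_coeffs (k : ℕ) :
    ∃ a : ℕ → ℝ, ∀ x, chebev k x = ∑ d ∈ range (k + 1), a d * x ^ d := by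
  refine ⟨fun d => (T ℝ k).coeff d, fun x => ?_⟩
  exact eval_eq_sum_range' (lt_of_le_of_lt (natDegree_T_le k) (Nat.lt_succ_self k)) x

lemma chebev_abs_le (k : ℕ) (x : ℝ) (h : |x| ≤ 1) : |chebev k x| ≤ 1 := by
  have h1 : -1 ≤ x := by cases abs_le.mp h; assumption
  have h2 : x ≤ 1 := by cases abs_le.mp h; assumption
  have hc : Real.cos (Real.arccos x) = x := Real.cos_arccos h1 h2
  have := T_real_cos (Real.arccos x) (k : ℤ)
  rw [hc] at this
  rw [chebev, this]
  exact Real.abs_cos_le_one _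

lemma chebev_pack : ∀ k : ℕ, ∀ x y : ℝ, 1 ≤ x → x ≤ y →
    1 ≤ chebev k x ∧ chebev k x ≤ chebev k y ∧
      chebev (k + 1) x - chebev k x ≤ chebev (k + 1) y - chebev k y ∧
      chebev k x ≤ chebev (k + 1) x := by
  intro k
  induction k with
  | zero =>
    intro x y hx hxy
    simp only [zero_add, chebev_zero, chebev_one]
    refine ⟨le_refl _, le_refl _, by linarith, hx⟩
  | succ k ih =>
    intro x y hx hxy
    obtain ⟨h1x, hmono, hdiff, hstep⟩ := ih x y hx hxy
    have h1y : 1 ≤ chebev k y := le_trans h1x hmono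
    have hk1x : 1 ≤ chebev (k+1) x := le_trans h1x hstep
    have hk1mono : chebev (k+1) x ≤ chebev (k+1) y := by linarith
    have hrecx := chebev_rec k x
    have hrecy := chebev_rec k y
    refine ⟨hk1x, hk1mono, ?_, ?_⟩
    · rw [hrecx, hrecy]
      have key : 2 * (x - 1) * chebev (k+1) x ≤ 2 * (y - 1) * chebev (k+1) y := by
        have h0x : (0:ℝ) ≤ x - 1 := by linarith
        have := mul_le_mul (by linarith : x - 1 ≤ y - 1) hk1mono (by linarith) (by linarith)
        linarith
      nlinarith [hdiff]
    · rw [hrecx]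
      nlinarith

lemma chebev_ge_one {k : ℕ} {x : ℝ} (hx : 1 ≤ x) : 1 ≤ chebev k x :=
  (chebev_pack k x x hx le_rfl).1

lemma chebev_mono {k : ℕ} {x y : ℝ} (hx : 1 ≤ x) (hxy : x ≤ y) :
    chebev k x ≤ chebev k y :=
  (chebev_pack k x y hx hxy).2.1

lemma chebev_two_two : chebev 2 2 = 7 := by
  rw [chebev_rec 0 2, chebev_one, chebev_zero]; norm_num

lemma chebev_growth : ∀ k : ℕ, 1 ≤ k →
    2 * chebev k 2 ≤ chebev (k + 1) 2 ∧ (7/2 : ℝ) * chebev k 2 ≤ chebev (k + 1) 2 := by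
  intro k
  induction k with
  | zero => omega
  | succ k ih =>
    intro _
    rcases Nat.eq_zero_or_pos k with hk | hk
    · subst hk
      rw [chebev_two_two, chebev_one]
      norm_num
    · obtain ⟨h2, h72⟩ := ih hk
      have hrec := chebev_rec k 2
      have hpos : (1:ℝ) ≤ chebev (k+1) 2 := chebev_ge_one (by norm_num)
      constructor <;> nlinarith

lemma chebev_two_lower : ∀ k : ℕ, 1 ≤ k → 2 * (7/2 : ℝ) ^ (k - 1) ≤ chebev k 2 := by
  intro k
  induction k with
  | zero => omega
  | succ k ih =>
    intro _
    rcases Nat.eq_zero_or_pos k with hk | hk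
    · subst hk; simp [chebev_one]
    · have h1 := ih hk
      have h2 := (chebev_growth k hk).2
      have he : k + 1 - 1 = (k - 1) + 1 := by omega
      rw [he, pow_succ]
      nlinarith [pow_pos (by norm_num : (0:ℝ) < 7/2) (k-1)]

lemma chebev_four_upper : ∀ k : ℕ, chebev k 4 ≤ (8:ℝ) ^ k := by
  intro k
  induction k using Nat.strong_induction_on with
  | _ k ih =>
    match k with
    | 0 => simp [chebev_zero]
    | 1 => rw [chebev_one]; norm_num
    | (k+2) =>
      have h1 := ih (k+1) (by omega)
      have h0 : (1:ℝ) ≤ chebev k 4 := chebev_ge_one (by norm_num)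
      rw [chebev_rec k 4]
      have h8 : (0:ℝ) < 8 := by norm_num
      have : (8:ℝ)^(k+2) = 8 * 8^(k+1) := by ring
      rw [this]
      nlinarith [pow_pos h8 (k+1)]

lemma chebval_step (k : ℕ) (x a b : ℝ) (h1 : chebev k x = a) (h2 : chebev (k+1) x = b) :
    chebev (k+2) x = 2*x*b - a := by
  rw [chebev_rec, h1, h2]

lemma chebev32 : chebev 3 2 = 26 := by
  rw [chebval_step 1 2 2 7 (chebev_one 2) chebev_two_two]; norm_num

lemma chebev42 : chebev 4 2 = 97 := by
  rw [chebval_step 2 2 7 26 chebev_two_two chebev32]; norm_num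

lemma chebev52 : chebev 5 2 = 362 := by
  rw [chebval_step 3 2 26 97 chebev32 chebev42]; norm_num

lemma chebev24 : chebev 2 4 = 31 := by
  rw [chebval_step 0 4 1 4 (chebev_zero 4) (chebev_one 4)]; norm_num

lemma chebev34 : chebev 3 4 = 244 := by
  rw [chebval_step 1 4 4 31 (chebev_one 4) chebev24]; norm_num

lemma chebev44 : chebev 4 4 = 1921 := by
  rw [chebval_step 2 4 31 244 chebev24 chebev34]; norm_num

lemma chebev54 : chebev 5 4 = 15124 := by
  rw [chebval_step 3 4 244 1921 chebev34 chebev44]; norm_num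

lemma rank_factorization {N n : ℕ} (A : Matrix (Fin N) (Fin N) ℝ) (h : A.rank ≤ n) :
    ∃ (m : ℕ) (u v : Fin N → Fin m → ℝ), m ≤ n ∧
      ∀ i j, A i j = ∑ s, u i s * v j s := by
  classical
  set C := LinearMap.range A.mulVecLin with hC
  haveI : FiniteDimensional ℝ C := by
    rw [hC, Matrix.range_mulVecLin]
    exact FiniteDimensional.span_of_finite ℝ (Set.finite_range _)
  have hmn : Module.finrank ℝ C ≤ n := h
  have hcol : ∀ j, (fun i => A i j) ∈ C := by
    intro j
    refine ⟨Pi.single j 1, ?_⟩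
    ext i
    simp [Matrix.mulVecLin_apply, Matrix.mulVec_single]
  let b := Module.finBasis ℝ C
  refine ⟨_, fun i s => ((b s : Fin N → ℝ) i), fun j s => b.repr ⟨_, hcol j⟩ s, hmn, ?_⟩
  intro i j
  have hrepr := b.sum_repr ⟨fun i => A i j, hcol j⟩
  have h2 := congrArg (Submodule.subtype C) hrepr
  simp only [map_sum, map_smul, Submodule.coe_subtype] at h2
  have h3 := congrFun h2 i
  simp only [Finset.sum_apply, Pi.smul_apply, smul_eq_mul] at h3
  rw [← h3]
  exact Finset.sum_congr rfl (fun s _ => mul_comm _ _)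

lemma onb_core {N r : ℕ} (M : Matrix (Fin N) (Fin N) ℝ)
    (e w : Fin r → Fin N → ℝ)
    (he : ∀ s t, (∑ i, e s i * e t i) = if s = t then (1:ℝ) else 0)
    (hM : ∀ i j, M i j = ∑ s, e s i * w s j) :
    (∑ i, M i i) ^ 2 ≤ r * ∑ i, ∑ j, (M i j) ^ 2 := by
  classical
  have hcol : ∀ j, (∑ i, (M i j) ^ 2) = ∑ s, (w s j) ^ 2 := by
    intro j
    have expand : ∀ i, (M i j) ^ 2 = ∑ s, ∑ t, (w s j * w t j) * (e s i * e t i) := by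
      intro i
      rw [hM i j, sq, Finset.sum_mul_sum]
      refine Finset.sum_congr rfl fun s _ => Finset.sum_congr rfl fun t _ => by ring
    calc (∑ i, (M i j) ^ 2)
        = ∑ i, ∑ s, ∑ t, (w s j * w t j) * (e s i * e t i) := by
          exact Finset.sum_congr rfl fun i _ => expand i
      _ = ∑ s, ∑ t, (w s j * w t j) * (∑ i, e s i * e t i) := by
          rw [Finset.sum_comm]
          refine Finset.sum_congr rfl fun s _ => ?_
          rw [Finset.sum_comm]
          refine Finset.sum_congr rfl fun t _ => ?_
          rw [← Finset.mul_sum]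
      _ = ∑ s, (w s j) ^ 2 := by
          refine Finset.sum_congr rfl fun s _ => ?_
          rw [Finset.sum_eq_single s]
          · rw [he s s, if_pos rfl]; ring
          · intro t _ hts
            rw [he s t, if_neg (fun hh => hts hh.symm), mul_zero]
          · intro hs; exact absurd (Finset.mem_univ s) hs
  have htr : (∑ i, M i i) = ∑ s, ∑ i, e s i * w s i := by
    calc (∑ i, M i i) = ∑ i, ∑ s, e s i * w s i :=
          Finset.sum_congr rfl fun i _ => hM i i
      _ = ∑ s, ∑ i, e s i * w s i := Finset.sum_comm
  have hcs1 : (∑ s, ∑ i, e s i * w s i) ^ 2 ≤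
      (r : ℝ) * ∑ s, (∑ i, e s i * w s i) ^ 2 := by
    have := Finset.sum_mul_sq_le_sq_mul_sq Finset.univ (fun _ : Fin r => (1:ℝ))
      (fun s => ∑ i, e s i * w s i)
    simpa [Finset.card_univ] using this
  have hcs2 : ∀ s, (∑ i, e s i * w s i) ^ 2 ≤ ∑ i, (w s i) ^ 2 := by
    intro s
    have := Finset.sum_mul_sq_le_sq_mul_sq Finset.univ (fun i => e s i) (fun i => w s i)
    have hnorm : (∑ i, (e s i) ^ 2) = 1 := by
      have := he s s
      rw [if_pos rfl] at this
      rw [← this]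
      exact Finset.sum_congr rfl fun i _ => (sq (e s i)).symm ▸ rfl
    rw [hnorm, one_mul] at this
    exact this
  calc (∑ i, M i i) ^ 2 = (∑ s, ∑ i, e s i * w s i) ^ 2 := by rw [htr]
    _ ≤ (r : ℝ) * ∑ s, (∑ i, e s i * w s i) ^ 2 := hcs1
    _ ≤ (r : ℝ) * ∑ s, ∑ i, (w s i) ^ 2 := by
        refine mul_le_mul_of_nonneg_left (Finset.sum_le_sum fun s _ => hcs2 s) (by positivity)
    _ = (r : ℝ) * ∑ i, ∑ s, (w s i) ^ 2 := by rw [Finset.sum_comm]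
    _ = (r : ℝ) * ∑ i, ∑ j, (M j i) ^ 2 := by
        refine congrArg _ (Finset.sum_congr rfl fun i _ => (hcol i).symm)
    _ = (r : ℝ) * ∑ i, ∑ j, (M i j) ^ 2 := by rw [Finset.sum_comm]

lemma exists_onb_factorization {N R : ℕ} (M : Matrix (Fin N) (Fin N) ℝ)
    (S : Finset (EuclideanSpace ℝ (Fin N))) (hcard : S.card ≤ R)
    (hmem : ∀ j, WithLp.toLp 2 (fun i => M i j) ∈ Submodule.span ℝ (S : Set (EuclideanSpace ℝ (Fin N)))) :
    ∃ (r : ℕ) (e w : Fin r → Fin N → ℝ), r ≤ R ∧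
      (∀ s t, (∑ i, e s i * e t i) = if s = t then (1:ℝ) else 0) ∧
      (∀ i j, M i j = ∑ s, e s i * w s j) := by
  classical
  set col : Fin N → EuclideanSpace ℝ (Fin N) := fun j => WithLp.toLp 2 (fun i => M i j) with hcoldef
  set C : Submodule ℝ (EuclideanSpace ℝ (Fin N)) := Submodule.span ℝ (Set.range col) with hCdef
  haveI : FiniteDimensional ℝ C := FiniteDimensional.span_of_finite ℝ (Set.finite_range _)
  haveI : FiniteDimensional ℝ (Submodule.span ℝ (S : Set (EuclideanSpace ℝ (Fin N)))) :=
    FiniteDimensional.span_of_finite ℝ S.finite_toSet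
  have hCS : C ≤ Submodule.span ℝ (S : Set (EuclideanSpace ℝ (Fin N))) := by
    rw [hCdef, Submodule.span_le]
    rintro _ ⟨j, rfl⟩
    exact hmem j
  have hrle : Module.finrank ℝ C ≤ R := by
    refine le_trans (Submodule.finrank_mono hCS) (le_trans ?_ hcard)
    exact finrank_span_finset_le_card S
  let b := stdOrthonormalBasis ℝ C
  have hcolmem : ∀ j, col j ∈ C := fun j => Submodule.subset_span ⟨j, rfl⟩
  refine ⟨Module.finrank ℝ C, fun s i => ((b s : EuclideanSpace ℝ (Fin N)) i),
    fun s j => b.repr ⟨col j, hcolmem j⟩ s, hrle, ?_, ?_⟩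
  · intro s t
    have horth := orthonormal_iff_ite.mp b.orthonormal s t
    rw [Submodule.coe_inner] at horth
    rw [PiLp.inner_apply] at horth
    simp only [RCLike.inner_apply, starRingEnd_apply, star_trivial] at horth
    rw [← horth]
    exact Finset.sum_congr rfl fun i _ => mul_comm _ _
  · intro i j
    have hrepr := b.sum_repr ⟨col j, hcolmem j⟩
    have h2 := congrArg (Submodule.subtype C) hrepr
    simp only [map_sum, map_smul, Submodule.coe_subtype] at h2
    have h3 := congrArg (fun z : EuclideanSpace ℝ (Fin N) => z i) h2
    simp only at h3
    rw [show (M i j) = col j i from rfl, ← h3]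
    rw [WithLp.ofLp_sum, Finset.sum_apply]
    exact Finset.sum_congr rfl fun s _ => by
      simp [PiLp.smul_apply, smul_eq_mul, mul_comm]

lemma summulti (m k : ℕ) : (∑ d ∈ range (k+1), Nat.multichoose m d) ≤ (m + k).choose k := by
  induction k with
  | zero => simp [Nat.multichoose]
  | succ k ih =>
    rw [Finset.sum_range_succ]
    have h1 : Nat.multichoose m (k+1) ≤ (m + k).choose (k+1) := by
      rw [Nat.multichoose_eq]
      exact Nat.choose_le_choose _ (by omega)
    have h2 : (m + (k+1)).choose (k+1) = (m + k).choose k + (m + k).choose (k+1) := by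
      have : m + (k+1) = (m + k) + 1 := by omega
      rw [this, Nat.choose_succ_succ]
    omega

lemma entrywise_poly_span {N m k : ℕ} (u v : Fin N → Fin m → ℝ) (a : ℕ → ℝ)
    (M : Matrix (Fin N) (Fin N) ℝ)
    (hM : ∀ i j, M i j = ∑ d ∈ range (k+1), a d * (∑ s, u i s * v j s) ^ d) :
    ∃ S : Finset (Fin N → ℝ), S.card ≤ (m + k).choose k ∧
      ∀ j, (fun i => M i j) ∈ Submodule.span ℝ (S : Set (Fin N → ℝ)) := by
  classical
  let f : (Σ d : Fin (k+1), Sym (Fin m) d) → (Fin N → ℝ) :=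
    fun p => fun i => ((p.2 : Multiset (Fin m)).map (u i)).prod
  refine ⟨Finset.image f Finset.univ, ?_, ?_⟩
  · refine le_trans Finset.card_image_le ?_
    rw [Finset.card_univ, Fintype.card_sigma]
    have : ∀ d : Fin (k+1), Fintype.card (Sym (Fin m) d) = Nat.multichoose m d := by
      intro d
      rw [Sym.card_sym_eq_multichoose, Fintype.card_fin]
    calc (∑ d : Fin (k+1), Fintype.card (Sym (Fin m) d))
        = ∑ d : Fin (k+1), Nat.multichoose m (d : ℕ) :=
          Finset.sum_congr rfl fun d _ => this d
      _ = ∑ d ∈ range (k+1), Nat.multichoose m d := Fin.sum_univ_eq_sum_range _ _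
      _ ≤ (m + k).choose k := summulti m k
  · intro j
    have key : (fun i => M i j) =
        ∑ d ∈ range (k+1), ∑ g ∈ Fintype.piFinset (fun _ : Fin d => (Finset.univ : Finset (Fin m))),
          (a d * ∏ t, v j (g t)) • (fun i => ∏ t, u i (g t)) := by
      funext i
      rw [Finset.sum_apply]
      rw [hM i j]
      refine Finset.sum_congr rfl fun d _ => ?_
      rw [Finset.sum_apply]
      rw [Finset.sum_pow' Finset.univ (fun s => u i s * v j s) d, Finset.mul_sum]
      refine Finset.sum_congr rfl fun g _ => ?_
      simp only [Pi.smul_apply, smul_eq_mul]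
      rw [Finset.prod_mul_distrib]
      ring
    rw [key]
    refine Submodule.sum_mem _ fun d hd => Submodule.sum_mem _ fun g _ => ?_
    refine Submodule.smul_mem _ _ (Submodule.subset_span ?_)
    rw [Finset.coe_image]
    refine ⟨⟨⟨d, Finset.mem_range.mp hd⟩,
      ⟨Finset.univ.val.map g, by simp⟩⟩, by simp, ?_⟩
    funext i
    show ((Finset.univ.val.map g).map (u i)).prod = ∏ t, u i (g t)
    rw [Multiset.map_map]
    rfl

theorem master {N n : ℕ} (k : ℕ) (A : Matrix (Fin N) (Fin N) ℝ)
    (hrank : A.rank ≤ n)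
    (hA : ∀ i j, |A i j - (if i = j then 1 else 0)| ≤ 1/3) :
    (N:ℝ) * (chebev k 2)^2 ≤ ((n+k).choose k : ℝ) * N
      + ((n+k).choose k : ℝ) * chebev k 2 * chebev k 4 := by
  classical
  set t2 : ℝ := chebev k 2 with ht2
  set t4 : ℝ := chebev k 4 with ht4
  set R : ℕ := (n+k).choose k with hRdef
  have hdiag : ∀ i, 2/3 ≤ A i i ∧ A i i ≤ 4/3 := by
    intro i
    have := hA i i
    rw [if_pos rfl] at this
    constructor <;> [linarith [abs_le.mp this]; linarith [abs_le.mp this]]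
  have hoff : ∀ i j, i ≠ j → |A i j| ≤ 1/3 := by
    intro i j hij
    have := hA i j
    rw [if_neg hij] at this
    simpa using this
  set M : Matrix (Fin N) (Fin N) ℝ := fun i j => chebev k (3 * A i j) with hMdef
  obtain ⟨m, u, v, hmn, hfac⟩ := rank_factorization A hrank
  obtain ⟨a, ha⟩ := chebev_coeffs k
  have hM : ∀ i j, M i j = ∑ d ∈ range (k+1), a d * (∑ s, (3 * u i s) * v j s) ^ d := by
    intro i j
    have h3 : (3 : ℝ) * A i j = ∑ s, (3 * u i s) * v j s := by
      rw [hfac i j, Finset.mul_sum]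
      exact Finset.sum_congr rfl fun s _ => by ring
    rw [hMdef]
    simp only
    rw [h3, ha]
  obtain ⟨S₀, hS₀card, hS₀mem⟩ := entrywise_poly_span (fun i s => 3 * u i s) v a M hM
  set ψ := (WithLp.linearEquiv 2 ℝ (Fin N → ℝ)).symm with hψ
  set S : Finset (EuclideanSpace ℝ (Fin N)) := S₀.image ψ with hSdef
  have hScard : S.card ≤ R :=
    le_trans Finset.card_image_le (le_trans hS₀card (Nat.choose_le_choose k (by omega)))
  have hSmem : ∀ j, WithLp.toLp 2 (fun i => M i j) ∈ Submodule.span ℝ (S : Set (EuclideanSpace ℝ (Fin N))) := by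
    intro j
    have h1 := Submodule.mem_map_of_mem (f := ψ.toLinearMap) (hS₀mem j)
    rw [Submodule.map_span] at h1
    have h2 : ψ.toLinearMap '' (S₀ : Set (Fin N → ℝ)) = (S : Set (EuclideanSpace ℝ (Fin N))) := by
      rw [hSdef, Finset.coe_image]
      rfl
    rw [h2] at h1
    exact h1
  obtain ⟨r, e, w, hrR, he, hew⟩ := exists_onb_factorization M S hScard hSmem
  have hcore : (∑ i, M i i) ^ 2 ≤ (r:ℝ) * ∑ i, ∑ j, (M i j) ^ 2 := onb_core M e w he hew
  have hcore' : (∑ i, M i i) ^ 2 ≤ (R:ℝ) * ∑ i, ∑ j, (M i j) ^ 2 := by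
    refine le_trans hcore (mul_le_mul_of_nonneg_right ?_ ?_)
    · exact_mod_cast hrR
    · positivity
  have hMdiag : ∀ i, t2 ≤ M i i ∧ M i i ≤ t4 := by
    intro i
    obtain ⟨h1, h2⟩ := hdiag i
    constructor
    · exact chebev_mono (by norm_num) (by linarith)
    · exact chebev_mono (by linarith) (by linarith)
  have hMoff : ∀ i j, i ≠ j → (M i j)^2 ≤ 1 := by
    intro i j hij
    have h1 : |3 * A i j| ≤ 1 := by
      have := hoff i j hij
      rw [abs_mul]
      rw [abs_of_pos (by norm_num : (0:ℝ) < 3)]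
      linarith [abs_nonneg (A i j)]
    have := chebev_abs_le k _ h1
    calc (M i j)^2 = |M i j|^2 := (sq_abs _).symm
      _ ≤ 1^2 := by
          refine pow_le_pow_left₀ (abs_nonneg _) ?_ 2
          exact this
      _ = 1 := one_pow 2
  have ht2pos : (0:ℝ) < t2 := lt_of_lt_of_le one_pos (chebev_ge_one (by norm_num))
  have ht4pos : (0:ℝ) < t4 := lt_of_lt_of_le one_pos (chebev_ge_one (by norm_num))
  set t : ℝ := ∑ i, M i i with htdef
  have htlb : (N:ℝ) * t2 ≤ t := by
    rw [htdef]
    calc (N:ℝ) * t2 = ∑ _i : Fin N, t2 := by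
          rw [Finset.sum_const, Finset.card_univ, Fintype.card_fin, nsmul_eq_mul]
      _ ≤ ∑ i, M i i := Finset.sum_le_sum fun i _ => (hMdiag i).1
  have hMdiagpos : ∀ i, 0 ≤ M i i := fun i => le_trans (le_of_lt ht2pos) (hMdiag i).1
  have hF : (∑ i, ∑ j, (M i j) ^ 2) ≤ t4 * t + (N:ℝ) * N := by
    have hrow : ∀ i, (∑ j, (M i j)^2) ≤ t4 * M i i + N := by
      intro i
      have hsplit : (∑ j, (M i j)^2) =
          (M i i)^2 + ∑ j ∈ Finset.univ.erase i, (M i j)^2 :=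
        (Finset.add_sum_erase _ _ (Finset.mem_univ i)).symm
      rw [hsplit]
      have h1 : (M i i)^2 ≤ t4 * M i i := by
        have := (hMdiag i).2
        nlinarith [hMdiagpos i]
      have h2 : (∑ j ∈ Finset.univ.erase i, (M i j)^2) ≤ N := by
        calc (∑ j ∈ Finset.univ.erase i, (M i j)^2)
            ≤ ∑ _j ∈ Finset.univ.erase i, (1:ℝ) := by
              refine Finset.sum_le_sum fun j hj => ?_
              exact hMoff i j (fun hh => (Finset.mem_erase.mp hj).1 hh.symm)
          _ = (Finset.univ.erase i).card := by rw [Finset.sum_const, nsmul_eq_mul, mul_one]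
          _ ≤ N := by
              have := Finset.card_erase_le (s := (Finset.univ : Finset (Fin N))) (a := i)
              have h3 : (Finset.univ : Finset (Fin N)).card = N := by
                rw [Finset.card_univ, Fintype.card_fin]
              exact_mod_cast le_trans this (le_of_eq h3)
      linarith
    calc (∑ i, ∑ j, (M i j)^2) ≤ ∑ i, (t4 * M i i + (N:ℝ)) :=
          Finset.sum_le_sum fun i _ => hrow i
      _ = t4 * t + (N:ℝ) * N := by
          rw [Finset.sum_add_distrib, ← Finset.mul_sum, ← htdef, Finset.sum_const,
            Finset.card_univ, Fintype.card_fin, nsmul_eq_mul]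
  have hkey : t^2 ≤ (R:ℝ) * (t4 * t + (N:ℝ)*N) := by
    refine le_trans hcore' (mul_le_mul_of_nonneg_left hF (by positivity))
  have hRpos : (0:ℝ) ≤ R := by positivity
  rcases Nat.eq_zero_or_pos N with hN | hN
  · subst hN
    simp only [Nat.cast_zero, zero_mul, mul_zero, zero_add]
    positivity
  have hNpos : (0:ℝ) < N := by exact_mod_cast hN
  have htpos : 0 < t := lt_of_lt_of_le (by positivity) htlb
  rcases le_or_gt ((N:ℝ) * t2) ((R:ℝ) * t4) with hcase | hcase
  · have : (N:ℝ) * t2^2 ≤ (R:ℝ) * t4 * t2 := by nlinarith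
    nlinarith
  · have hpos2 : 0 ≤ (N:ℝ)*t2 - (R:ℝ)*t4 := by linarith
    have ha1 : (N:ℝ)*t2*t ≤ t*t := mul_le_mul_of_nonneg_right htlb (le_of_lt htpos)
    have h5 : t * ((N:ℝ)*t2 - (R:ℝ)*t4) ≤ (R:ℝ) * ((N:ℝ)*N) := by nlinarith [hkey, ha1]
    have h6 : (N:ℝ)*t2 * ((N:ℝ)*t2 - (R:ℝ)*t4) ≤ (R:ℝ)*((N:ℝ)*N) :=
      le_trans (mul_le_mul_of_nonneg_right htlb hpos2) h5
    have h6' : (N:ℝ) * (t2 * ((N:ℝ)*t2 - (R:ℝ)*t4)) ≤ (N:ℝ) * ((R:ℝ)*(N:ℝ)) := by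
      nlinarith [h6]
    have h7 := le_of_mul_le_mul_left h6' hNpos
    nlinarith [h7]
lemma choose_ratio (k : ℕ) :
    ((4*(k+1)).choose (k+1) : ℝ) * ((k+1)*(3*k+1)*(3*k+2)*(3*k+3)) =
      ((4*k).choose k : ℝ) * ((4*k+1)*(4*k+2)*(4*k+3)*(4*k+4)) := by
  have f1 := Nat.choose_mul_factorial_mul_factorial (show k ≤ 4*k by omega)
  rw [show 4*k - k = 3*k by omega] at f1
  have f2 := Nat.choose_mul_factorial_mul_factorial (show k+1 ≤ 4*(k+1) by omega)
  rw [show 4*(k+1) - (k+1) = 3*k+3 by omega] at f2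
  have e1 : Nat.factorial (k+1) = (k+1) * Nat.factorial k := Nat.factorial_succ k
  have e2 : Nat.factorial (3*k+3) = (3*k+3)*(3*k+2)*(3*k+1) * Nat.factorial (3*k) := by
    rw [show 3*k+3 = (3*k+2)+1 from rfl, Nat.factorial_succ,
       show 3*k+2 = (3*k+1)+1 from rfl, Nat.factorial_succ,
       show 3*k+1 = (3*k)+1 from rfl, Nat.factorial_succ]
    ring
  have e3 : Nat.factorial (4*(k+1)) = (4*k+4)*(4*k+3)*(4*k+2)*(4*k+1) * Nat.factorial (4*k) := by
    rw [show 4*(k+1) = (4*k+3)+1 by omega, Nat.factorial_succ,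
       show 4*k+3 = (4*k+2)+1 from rfl, Nat.factorial_succ,
       show 4*k+2 = (4*k+1)+1 from rfl, Nat.factorial_succ,
       show 4*k+1 = (4*k)+1 from rfl, Nat.factorial_succ]
    ring
  rw [e1, e2, e3] at f2
  -- cast to ℝ
  have f1' : ((4*k).choose k : ℝ) * (Nat.factorial k) * (Nat.factorial (3*k)) = Nat.factorial (4*k) := by
    exact_mod_cast congrArg (fun z : ℕ => (z : ℝ)) f1
  have f2' : ((4*(k+1)).choose (k+1) : ℝ) * ((k+1) * Nat.factorial k) *
      ((3*k+3)*(3*k+2)*(3*k+1) * Nat.factorial (3*k)) =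
      (4*k+4)*(4*k+3)*(4*k+2)*(4*k+1) * Nat.factorial (4*k) := by
    exact_mod_cast congrArg (fun z : ℕ => (z : ℝ)) f2
  have hkpos : (0:ℝ) < Nat.factorial k := by exact_mod_cast Nat.factorial_pos k
  have h3kpos : (0:ℝ) < Nat.factorial (3*k) := by exact_mod_cast Nat.factorial_pos (3*k)
  rw [← f1'] at f2'
  have hne : (Nat.factorial k : ℝ) * (Nat.factorial (3*k)) ≠ 0 := by positivity
  apply mul_right_cancel₀ hne
  linear_combination f2'

lemma binom_est : ∀ k : ℕ, ((4*k).choose k : ℝ) ≤ (256/27) ^ k := by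
  intro k
  induction k with
  | zero => simp
  | succ k ih =>
    have hratio := choose_ratio k
    have hpos : (0:ℝ) < ((k:ℝ)+1)*(3*k+1)*(3*k+2)*(3*k+3) := by positivity
    have hineq : (27:ℝ) * ((4*k+1)*(4*k+2)*(4*k+3)*(4*k+4)) ≤
        256 * (((k:ℝ)+1)*(3*k+1)*(3*k+2)*(3*k+3)) := by nlinarith [sq_nonneg (k:ℝ), (Nat.cast_nonneg k : (0:ℝ) ≤ k)]
    have hC1 : (0:ℝ) ≤ ((4*k).choose k : ℝ) := by positivity
    -- C2 * D = C1 * P,  27 P ≤ 256 D  ⟹  27 C2 D ≤ 256 C1 D ⟹ C2 ≤ (256/27) C1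
    have h1 : ((4*(k+1)).choose (k+1) : ℝ) * (((k:ℝ)+1)*(3*k+1)*(3*k+2)*(3*k+3)) * 27 ≤
        ((4*k).choose k : ℝ) * (256 * (((k:ℝ)+1)*(3*k+1)*(3*k+2)*(3*k+3))) := by
      push_cast at hratio
      nlinarith [hratio, hC1, hineq]
    have h2 : ((4*(k+1)).choose (k+1) : ℝ) * 27 ≤ ((4*k).choose k : ℝ) * 256 := by
      have h1' : (((4*(k+1)).choose (k+1) : ℝ) * 27) * (((k:ℝ)+1)*(3*k+1)*(3*k+2)*(3*k+3)) ≤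
          (((4*k).choose k : ℝ) * 256) * (((k:ℝ)+1)*(3*k+1)*(3*k+2)*(3*k+3)) := by
        nlinarith [h1]
      exact le_of_mul_le_mul_right h1' hpos
    calc ((4*(k+1)).choose (k+1) : ℝ) ≤ (256/27) * ((4*k).choose k : ℝ) := by linarith
      _ ≤ (256/27) * (256/27)^k := by
          refine mul_le_mul_of_nonneg_left ih (by norm_num)
      _ = (256/27)^(k+1) := by ring
lemma large_arith (N n k : ℕ) (t2 t4 : ℝ)
    (hk : 9 ≤ k) (hn2 : 3*k ≤ n+2)
    (hr : ((n+k).choose k : ℝ) ≤ (256/27)^k)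
    (ht2L : 2*(7/2:ℝ)^(k-1) ≤ t2) (ht2pos : 0 < t2)
    (ht4 : t4 ≤ (8:ℝ)^k) (ht4pos : 0 ≤ t4)
    (hmaster : (N:ℝ)*t2^2 ≤ ((n+k).choose k : ℝ)*N + ((n+k).choose k : ℝ)*t2*t4) :
    N ≤ 6^n := by
  set r : ℝ := ((n+k).choose k : ℝ) with hrdef
  have hrpos : 0 ≤ r := by positivity
  have hk1 : k - 1 + 1 = k := by omega
  -- feasibility : 2r ≤ t2^2
  have hsmall : ((1024:ℝ)/1323)^(k-1) ≤ 27/128 := by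
    calc ((1024:ℝ)/1323)^(k-1) ≤ ((1024:ℝ)/1323)^8 := by
          refine pow_le_pow_of_le_one (by norm_num) (by norm_num) (by omega)
      _ ≤ 27/128 := by norm_num
  have hfeas : 2*r ≤ t2^2 := by
    have h1 : (256/27:ℝ)^k = (256/27) * ((49/4)^(k-1) * (1024/1323)^(k-1)) := by
      rw [← mul_pow]
      have : ((49:ℝ)/4) * (1024/1323) = 256/27 := by norm_num
      rw [this, ← pow_succ']
      rw [hk1]
    have h2 : (2:ℝ)*r ≤ 2*(256/27)^k := by linarith
    have h3 : (2:ℝ)*(256/27)^k ≤ 4*(49/4)^(k-1) := by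
      rw [h1]
      have hp : (0:ℝ) ≤ (49/4:ℝ)^(k-1) := by positivity
      have := mul_le_mul_of_nonneg_left hsmall hp
      nlinarith [this, hp]
    have h4 : (4:ℝ)*(49/4)^(k-1) ≤ t2^2 := by
      have hsq : (2*(7/2:ℝ)^(k-1))^2 = 4*(49/4)^(k-1) := by
        rw [mul_pow, ← pow_mul]
        have : ((7:ℝ)/2)^((k-1)*2) = ((7/2)^2)^(k-1) := by
          rw [← pow_mul, Nat.mul_comm]
        rw [this]
        norm_num
      have hL : (0:ℝ) ≤ 2*(7/2:ℝ)^(k-1) := by positivity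
      nlinarith [ht2L, hL]
    linarith
  -- N * t2 ≤ 2 r t4
  have hNt2 : (N:ℝ)*t2 ≤ 2*r*t4 := by
    have h5 : (t2^2/2)*N ≤ r*t2*t4 := by nlinarith [hmaster, hfeas, (Nat.cast_nonneg N : (0:ℝ) ≤ N)]
    have h6 : (N:ℝ)*t2*(t2/2) ≤ (2*r*t4)*(t2/2) := by nlinarith [h5]
    exact le_of_mul_le_mul_right h6 (by positivity)
  -- chain
  have hchain : (N:ℝ)*(7/2)^(k-1) ≤ (2048/27)^k := by
    have h7 : (2:ℝ)*r*t4 ≤ 2*(2048/27)^k := by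
      have : (2048/27:ℝ)^k = (256/27)^k * 8^k := by
        rw [← mul_pow]; norm_num
      rw [this]
      have h8 : (0:ℝ) ≤ (256/27:ℝ)^k := by positivity
      have h9 : (0:ℝ) ≤ (8:ℝ)^k := by positivity
      nlinarith [mul_le_mul hr ht4 ht4pos h8]
    have h10 : (N:ℝ)*(2*(7/2)^(k-1)) ≤ 2*(2048/27)^k := by
      have := mul_le_mul_of_nonneg_left ht2L (Nat.cast_nonneg N : (0:ℝ) ≤ N)
      linarith [hNt2]
    linarith
  have hfinal : ((2048:ℝ)/27)^k ≤ (6:ℝ)^n * (7/2)^(k-1) := by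
    have e1 : ((2048:ℝ)/27)^k = (2048/27) * (2048/27)^(k-1) := by
      rw [← pow_succ', hk1]
    have e2 : (6:ℝ)^n ≥ 6 * (216:ℝ)^(k-1) := by
      have : (6:ℝ)^(3*(k-1)+1) = 6 * (216:ℝ)^(k-1) := by
        rw [pow_succ', pow_mul]; norm_num
      rw [← this]
      refine pow_le_pow_right₀ (by norm_num) (by omega)
    have e3 : ((16384:ℝ)/27)^(k-1) ≤ (756:ℝ)^(k-1) := by
      refine pow_le_pow_left₀ (by norm_num) (by norm_num) _
    have e4 : (8:ℝ)^(k-1) * (2048/27)^(k-1) = ((16384:ℝ)/27)^(k-1) := by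
      rw [← mul_pow]; norm_num
    have e5 : (2048:ℝ)/27 ≤ 6 * (8:ℝ)^(k-1) := by
      have h64 : (64:ℝ) ≤ (8:ℝ)^(k-1) := by
        calc (64:ℝ) = 8^2 := by norm_num
          _ ≤ (8:ℝ)^(k-1) := pow_le_pow_right₀ (by norm_num) (by omega)
      linarith
    have e6 : (216:ℝ)^(k-1) * (7/2)^(k-1) = (756:ℝ)^(k-1) := by
      rw [← mul_pow]; norm_num
    -- LHS = (2048/27)*(2048/27)^{k-1} ≤ 6*8^{k-1}*(2048/27)^{k-1} ≤ 6*(16384/27)^{k-1}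
    --     ≤ 6*756^{k-1} = 6*216^{k-1}*(7/2)^{k-1} ≤ 6^n*(7/2)^{k-1}
    have hp1 : (0:ℝ) ≤ (2048/27:ℝ)^(k-1) := by positivity
    have hp2 : (0:ℝ) ≤ (7/2:ℝ)^(k-1) := by positivity
    calc ((2048:ℝ)/27)^k = (2048/27) * (2048/27)^(k-1) := e1
      _ ≤ (6 * (8:ℝ)^(k-1)) * (2048/27)^(k-1) := mul_le_mul_of_nonneg_right e5 hp1
      _ = 6 * ((16384:ℝ)/27)^(k-1) := by rw [← e4]; ring
      _ ≤ 6 * (756:ℝ)^(k-1) := by linarith [e3]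
      _ = 6 * ((216:ℝ)^(k-1) * (7/2)^(k-1)) := by rw [e6]
      _ ≤ (6:ℝ)^n * (7/2)^(k-1) := by nlinarith [e2, hp2, pow_nonneg (by norm_num : (0:ℝ) ≤ 216) (k-1)]
  have hN6 : (N:ℝ) ≤ (6:ℝ)^n := by
    have h11 : (N:ℝ)*(7/2)^(k-1) ≤ (6:ℝ)^n * (7/2)^(k-1) := le_trans hchain hfinal
    exact le_of_mul_le_mul_right h11 (by positivity)
  have : (N:ℝ) ≤ ((6^n : ℕ) : ℝ) := by push_cast; exact hN6
  exact_mod_cast this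

lemma small_wrap {N q r : ℕ} {t2 t4 : ℝ}
    (hmaster : (N:ℝ)*t2^2 ≤ (r:ℝ)*N + (r:ℝ)*t2*t4)
    (hpos : (r:ℝ) < t2^2)
    (hfin : (r:ℝ)*t2*t4 ≤ ((q:ℕ):ℝ)*(t2^2 - r)) : N ≤ q := by
  have hq : (0:ℝ) ≤ (q:ℝ) := Nat.cast_nonneg q
  have hN : (N:ℝ) ≤ (q:ℝ) := by nlinarith [hmaster, hfin, hpos]
  exact_mod_cast hN

lemma small_case {N : ℕ} (n k r : ℕ) (t2v t4v : ℝ) (A : Matrix (Fin N) (Fin N) ℝ)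
    (hrank : A.rank ≤ n)
    (hA : ∀ i j, |A i j - (if i = j then 1 else 0)| ≤ 1/3)
    (h2 : chebev k 2 = t2v) (h4 : chebev k 4 = t4v) (hrv : (n+k).choose k = r)
    (hpos : (r:ℝ) < t2v^2)
    (hfin : (r:ℝ)*t2v*t4v ≤ ((6^n : ℕ):ℝ)*(t2v^2 - r)) : N ≤ 6^n := by
  have hm := master k A hrank hA
  rw [h2, h4, hrv] at hm
  exact small_wrap hm hpos hfin

lemma tiny_case {N n : ℕ} (A : Matrix (Fin N) (Fin N) ℝ)
    (hrank : A.rank ≤ n)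
    (hA : ∀ i j, |A i j - (if i = j then 1 else 0)| ≤ 1/3)
    (hn : n ≤ 1) : N ≤ 1 := by
  obtain ⟨m, u, v, hm, hfac⟩ := rank_factorization A hrank
  rcases Nat.lt_or_ge N 2 with h | h
  · omega
  exfalso
  have hm1 : m ≤ 1 := le_trans hm hn
  set i0 : Fin N := ⟨0, by omega⟩ with hi0
  set i1 : Fin N := ⟨1, by omega⟩ with hi1
  have hne : i0 ≠ i1 := by
    intro hh
    rw [hi0, hi1] at hh
    simpa using congrArg Fin.val hh
  have hd0 := hA i0 i0
  rw [if_pos rfl] at hd0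
  have hd1 := hA i1 i1
  rw [if_pos rfl] at hd1
  have ho01 := hA i0 i1
  rw [if_neg hne] at ho01
  have ho10 := hA i1 i0
  rw [if_neg (fun hh => hne hh.symm)] at ho10
  interval_cases m
  · have h0 : A i0 i0 = 0 := by
      rw [hfac i0 i0]
      simp
    rw [h0] at hd0
    norm_num at hd0
  · have hid : A i0 i0 * A i1 i1 = A i0 i1 * A i1 i0 := by
      rw [hfac i0 i0, hfac i1 i1, hfac i0 i1, hfac i1 i0]
      simp [Fin.sum_univ_one]
      ring
    obtain ⟨hd0a, hd0b⟩ := abs_le.mp hd0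
    obtain ⟨hd1a, hd1b⟩ := abs_le.mp hd1
    obtain ⟨ho01a, ho01b⟩ := abs_le.mp ho01
    obtain ⟨ho10a, ho10b⟩ := abs_le.mp ho10
    simp only [sub_zero] at ho01a ho01b ho10a ho10b
    nlinarith [hid]

theorem stmt_1 (N n : ℕ) (A : Matrix (Fin N) (Fin N) ℝ)
    (hrank : A.rank ≤ n)
    (hA : ∀ i j, |A i j - (if i = j then 1 else 0)| ≤ 1/3) :
    N ≤ 6 ^ n := by
  rcases Nat.lt_or_ge n 2 with hn2 | hn2
  · have h1 := tiny_case A hrank hA (by omega)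
    have : 1 ≤ 6^n := Nat.one_le_pow _ _ (by norm_num)
    omega
  rcases Nat.lt_or_ge n 25 with hn25 | hn25
  · interval_cases n
    · exact small_case 2 2 6 7 31 A hrank hA chebev_two_two chebev24 (by decide) (by norm_num) (by norm_num)
    · exact small_case 3 2 10 7 31 A hrank hA chebev_two_two chebev24 (by decide) (by norm_num) (by norm_num)
    · exact small_case 4 2 15 7 31 A hrank hA chebev_two_two chebev24 (by decide) (by norm_num) (by norm_num)
    · exact small_case 5 2 21 7 31 A hrank hA chebev_two_two chebev24 (by decide) (by norm_num) (by norm_num)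
    · exact small_case 6 2 28 7 31 A hrank hA chebev_two_two chebev24 (by decide) (by norm_num) (by norm_num)
    · exact small_case 7 2 36 7 31 A hrank hA chebev_two_two chebev24 (by decide) (by norm_num) (by norm_num)
    · exact small_case 8 2 45 7 31 A hrank hA chebev_two_two chebev24 (by decide) (by norm_num) (by norm_num)
    · exact small_case 9 3 220 26 244 A hrank hA chebev32 chebev34 (by decide) (by norm_num) (by norm_num)
    · exact small_case 10 3 286 26 244 A hrank hA chebev32 chebev34 (by decide) (by norm_num) (by norm_num)
    · exact small_case 11 3 364 26 244 A hrank hA chebev32 chebev34 (by decide) (by norm_num) (by norm_num)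
    · exact small_case 12 3 455 26 244 A hrank hA chebev32 chebev34 (by decide) (by norm_num) (by norm_num)
    · exact small_case 13 3 560 26 244 A hrank hA chebev32 chebev34 (by decide) (by norm_num) (by norm_num)
    · exact small_case 14 4 3060 97 1921 A hrank hA chebev42 chebev44 (by decide) (by norm_num) (by norm_num)
    · exact small_case 15 4 3876 97 1921 A hrank hA chebev42 chebev44 (by decide) (by norm_num) (by norm_num)
    · exact small_case 16 4 4845 97 1921 A hrank hA chebev42 chebev44 (by decide) (by norm_num) (by norm_num)
    · exact small_case 17 4 5985 97 1921 A hrank hA chebev42 chebev44 (by decide) (by norm_num) (by norm_num)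
    · exact small_case 18 4 7315 97 1921 A hrank hA chebev42 chebev44 (by decide) (by norm_num) (by norm_num)
    · exact small_case 19 4 8855 97 1921 A hrank hA chebev42 chebev44 (by decide) (by norm_num) (by norm_num)
    · exact small_case 20 5 53130 362 15124 A hrank hA chebev52 chebev54 (by decide) (by norm_num) (by norm_num)
    · exact small_case 21 5 65780 362 15124 A hrank hA chebev52 chebev54 (by decide) (by norm_num) (by norm_num)
    · exact small_case 22 5 80730 362 15124 A hrank hA chebev52 chebev54 (by decide) (by norm_num) (by norm_num)
    · exact small_case 23 5 98280 362 15124 A hrank hA chebev52 chebev54 (by decide) (by norm_num) (by norm_num)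
    · exact small_case 24 5 118755 362 15124 A hrank hA chebev52 chebev54 (by decide) (by norm_num) (by norm_num)
  · set k : ℕ := (n+2)/3 with hkdef
    have hk9 : 9 ≤ k := by omega
    have hk3a : n ≤ 3*k := by omega
    have hk3b : 3*k ≤ n+2 := by omega
    have hm := master k A hrank hA
    refine large_arith N n k (chebev k 2) (chebev k 4) hk9 hk3b ?_ ?_ ?_ ?_ ?_ hm
    · calc ((n+k).choose k : ℝ) ≤ ((4*k).choose k : ℝ) := by
            exact_mod_cast Nat.choose_le_choose k (by omega)
        _ ≤ (256/27)^k := binom_est k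
    · exact chebev_two_lower k (by omega)
    · exact lt_of_lt_of_le one_pos (chebev_ge_one (by norm_num))
    · exact chebev_four_upper k
    · exact le_trans zero_le_one (chebev_ge_one (by norm_num))
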